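/- Let p be an odd prime with p not divisible by 3. Then 2·∑_{0<x<p, x odd} ∑_{0<r, r ∣ p²−x²} χ(r) equals (p−1)/3 if p ≡ 1 (mod 3), and equals (p+1)/3 if p ≡ 2 (mod 3). Here the inner sum runs over the positive divisors r of p² − x². -/

import Mathlib

/-- The Kronecker symbol `(−3/·)` on positive integers: `χ(r) = 1` if `r ≡ 1 (mod 3)`,
`χ(r) = −1` if `r ≡ 2 (mod 3)`, and `χ(r) = 0` if `3 ∣ r`. -/
def kroneckerNegThree (r : ℕ) : ℤ :=
  if r % 3 = 1 then 1 else if r % 3 = 2 then -1 else 0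

namespace SK

open Finset ArithmeticFunction
open scoped ArithmeticFunction.zeta

lemma chi_mul (m n : ℕ) : kroneckerNegThree (m * n) = kroneckerNegThree m * kroneckerNegThree n := by
  have hm : m % 3 = 0 ∨ m % 3 = 1 ∨ m % 3 = 2 := by omega
  have hn : n % 3 = 0 ∨ n % 3 = 1 ∨ n % 3 = 2 := by omega
  rcases hm with hm | hm | hm <;> rcases hn with hn | hn | hn <;>
    simp [kroneckerNegThree, Nat.mul_mod, hm, hn]

def chiA : ArithmeticFunction ℤ := ⟨kroneckerNegThree, by simp [kroneckerNegThree]⟩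

lemma chiA_isMult : chiA.IsMultiplicative :=
  ⟨by simp [chiA, kroneckerNegThree], fun {m n} _ => chi_mul m n⟩

def G (m : ℕ) : ℤ := ∑ r ∈ m.divisors, kroneckerNegThree r

lemma G_eq (m : ℕ) : G m = ((ζ : ArithmeticFunction ℤ) * chiA) m := by
  rw [coe_zeta_mul_apply]; rfl

lemma G_isMult : ((ζ : ArithmeticFunction ℤ) * chiA).IsMultiplicative :=
  isMultiplicative_zeta.natCast.mul chiA_isMult

lemma G_mul_coprime {m n : ℕ} (h : m.Coprime n) : G (m * n) = G m * G n := by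
  rw [G_eq, G_eq, G_eq, G_isMult.map_mul_of_coprime h]

lemma two_pow_mod_three (i : ℕ) : 2 ^ i % 3 = if Even i then 1 else 2 := by
  induction i with
  | zero => simp
  | succ k ih =>
    rw [pow_succ, Nat.mul_mod, ih]
    rcases Nat.even_or_odd k with h | h
    · simp [h, Nat.even_add_one]
    · simp [Nat.not_even_iff_odd.2 h, Nat.even_add_one, Nat.not_odd_iff_even.1, h]

lemma chi_two_pow (i : ℕ) : kroneckerNegThree (2 ^ i) = (-1) ^ i := by
  rw [kroneckerNegThree, two_pow_mod_three]
  rcases Nat.even_or_odd i with h | h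
  · simp [h, h.neg_one_pow]
  · simp [Nat.not_even_iff_odd.2 h, h.neg_one_pow]

lemma G_two_pow (k : ℕ) : G (2 ^ k) = if Even k then 1 else 0 := by
  unfold G
  rw [Nat.sum_divisors_prime_pow Nat.prime_two]
  induction k with
  | zero => simp [kroneckerNegThree]
  | succ n ih =>
    rw [Finset.sum_range_succ, ih, chi_two_pow]
    rcases Nat.even_or_odd n with h | h
    · simp [h, Nat.even_add_one, h.neg_one_pow]
    · simp [Nat.not_even_iff_odd.2 h, Nat.even_add_one, h.neg_one_pow]

lemma G_four_mul {m : ℕ} (hm : m ≠ 0) : G (4 * m) = G m := by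
  obtain ⟨t, w, hcop, hw⟩ : ∃ t w, Nat.Coprime 2 w ∧ m = 2 ^ t * w :=
    ⟨m.factorization 2, m / 2 ^ m.factorization 2, Nat.coprime_ordCompl Nat.prime_two hm,
      (Nat.ordProj_mul_ordCompl_eq_self m 2).symm⟩
  subst hw
  have h4 : 4 * (2 ^ t * w) = 2 ^ (t + 2) * w := by rw [pow_add]; ring
  rw [h4, G_mul_coprime (Nat.Coprime.pow_left _ hcop),
    G_mul_coprime (Nat.Coprime.pow_left _ hcop), G_two_pow, G_two_pow]
  have hiff : Even (t + 2) ↔ Even t := by simp [Nat.even_add]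
  rcases Nat.even_or_odd t with h | h
  · simp [hiff, h]
  · simp [hiff, Nat.not_even_iff_odd.2 h]
def Q (p : ℕ) : Finset (ℕ × ℕ × ℕ × ℕ) :=
  ((range (p+1)) ×ˢ (range (p+1)) ×ˢ (range (p+1)) ×ˢ (range (p+1))).filter
    (fun q => 0 < q.1 ∧ 0 < q.2.1 ∧ 0 < q.2.2.1 ∧ 0 < q.2.2.2 ∧
      q.1 * q.2.1 + q.2.2.1 * q.2.2.2 = p)

lemma mem_Q {p : ℕ} {q : ℕ × ℕ × ℕ × ℕ} :
    q ∈ Q p ↔ 0 < q.1 ∧ 0 < q.2.1 ∧ 0 < q.2.2.1 ∧ 0 < q.2.2.2 ∧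
      q.1 * q.2.1 + q.2.2.1 * q.2.2.2 = p := by
  obtain ⟨a, b, c, d⟩ := q
  simp only [Q, mem_filter, mem_product, mem_range]
  constructor
  · tauto
  · rintro ⟨ha, hb, hc, hd, he⟩
    have h1 : a ≤ a * b := Nat.le_mul_of_pos_right _ hb
    have h2 : b ≤ a * b := Nat.le_mul_of_pos_left _ ha
    have h3 : c ≤ c * d := Nat.le_mul_of_pos_right _ hd
    have h4 : d ≤ c * d := Nat.le_mul_of_pos_left _ hc
    exact ⟨⟨by omega, by omega, by omega, by omega⟩, ha, hb, hc, hd, he⟩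

def E1 (q : ℕ × ℕ × ℕ × ℕ) : ℤ := if 3 ∣ q.1 + 2 * q.2.2.1 then 1 else 0
def E2 (q : ℕ × ℕ × ℕ × ℕ) : ℤ := if 3 ∣ q.1 + q.2.2.1 then 1 else 0

lemma chi_pair (a c : ℕ) :
    kroneckerNegThree a * kroneckerNegThree c =
      (if 3 ∣ a + 2 * c then (1 : ℤ) else 0) - (if 3 ∣ a + c then (1 : ℤ) else 0) := by
  have ha : a % 3 = 0 ∨ a % 3 = 1 ∨ a % 3 = 2 := by omega
  have hc : c % 3 = 0 ∨ c % 3 = 1 ∨ c % 3 = 2 := by omega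
  have h1 : (3 ∣ a + 2 * c) ↔ (a % 3 + 2 * (c % 3)) % 3 = 0 := by omega
  have h2 : (3 ∣ a + c) ↔ (a % 3 + c % 3) % 3 = 0 := by omega
  rcases ha with ha | ha | ha <;> rcases hc with hc | hc | hc <;>
    simp [kroneckerNegThree, ha, hc, h1, h2]

/-- The descent bijection. -/
def kap (q : ℕ × ℕ × ℕ × ℕ) : ℕ × ℕ × ℕ × ℕ :=
  if q.2.1 < q.2.2.2 then (q.1 + q.2.2.1, q.2.1, q.2.2.1, q.2.2.2 - q.2.1)
  else (q.1, q.2.1 - q.2.2.2, q.2.2.1 + q.1, q.2.2.2)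

def pik (q : ℕ × ℕ × ℕ × ℕ) : ℕ × ℕ × ℕ × ℕ :=
  if q.2.2.1 < q.1 then (q.1 - q.2.2.1, q.2.1, q.2.2.1, q.2.2.2 + q.2.1)
  else (q.1, q.2.1 + q.2.2.2, q.2.2.1 - q.1, q.2.2.2)

lemma kappa_sum (p : ℕ) :
    ∑ q ∈ (Q p).filter (fun q => q.2.1 ≠ q.2.2.2), E1 q =
    ∑ q ∈ (Q p).filter (fun q => q.1 ≠ q.2.2.1), E2 q := by
  apply Finset.sum_nbij' (i := kap) (j := pik)
  · -- kap maps in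
    rintro ⟨a, b, c, d⟩ hq
    simp only [mem_filter, mem_Q] at hq
    obtain ⟨⟨ha, hb, hc, hd, he⟩, hbd⟩ := hq
    simp only [mem_filter, mem_Q, kap]
    by_cases h : b < d
    · obtain ⟨e, rfl⟩ : ∃ e, d = b + (e + 1) := ⟨d - b - 1, by omega⟩
      simp only [if_pos h]
      have hsub : b + (e + 1) - b = e + 1 := by omega
      refine ⟨⟨by omega, hb, hc, by omega, ?_⟩, by omega⟩
      rw [hsub]
      calc (a + c) * b + c * (e + 1) = a * b + c * (b + (e + 1)) := by ring
        _ = p := he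
    · have h' : d < b := by omega
      obtain ⟨e, rfl⟩ : ∃ e, b = d + (e + 1) := ⟨b - d - 1, by omega⟩
      simp only [if_neg h]
      have hsub : d + (e + 1) - d = e + 1 := by omega
      refine ⟨⟨ha, by omega, by omega, hd, ?_⟩, by omega⟩
      rw [hsub]
      calc a * (e + 1) + (c + a) * d = a * (d + (e + 1)) + c * d := by ring
        _ = p := he
  · -- pik maps back
    rintro ⟨a, b, c, d⟩ hq
    simp only [mem_filter, mem_Q] at hq
    obtain ⟨⟨ha, hb, hc, hd, he⟩, hac⟩ := hq
    simp only [mem_filter, mem_Q, pik]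
    by_cases h : c < a
    · obtain ⟨e, rfl⟩ : ∃ e, a = c + (e + 1) := ⟨a - c - 1, by omega⟩
      simp only [if_pos h]
      have hsub : c + (e + 1) - c = e + 1 := by omega
      refine ⟨⟨by omega, hb, hc, by omega, ?_⟩, by omega⟩
      rw [hsub]
      calc (e + 1) * b + c * (d + b) = (c + (e + 1)) * b + c * d := by ring
        _ = p := he
    · have h' : a < c := by omega
      obtain ⟨e, rfl⟩ : ∃ e, c = a + (e + 1) := ⟨c - a - 1, by omega⟩
      simp only [if_neg h]
      have hsub : a + (e + 1) - a = e + 1 := by omega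
      refine ⟨⟨ha, by omega, by omega, hd, ?_⟩, by omega⟩
      rw [hsub]
      calc a * (b + d) + (e + 1) * d = a * b + (a + (e + 1)) * d := by ring
        _ = p := he
  · -- left inverse
    rintro ⟨a, b, c, d⟩ hq
    simp only [mem_filter, mem_Q] at hq
    obtain ⟨⟨ha, hb, hc, hd, he⟩, hbd⟩ := hq
    by_cases h : b < d
    · simp only [kap, if_pos h]
      simp only [pik]
      rw [if_pos (show c < a + c by omega)]
      simp only [Prod.mk.injEq]
      exact ⟨by omega, trivial, trivial, by omega⟩
    · simp only [kap, if_neg h]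
      simp only [pik]
      rw [if_neg (show ¬ (c + a < a) by omega)]
      simp only [Prod.mk.injEq]
      exact ⟨trivial, by omega, by omega, trivial⟩
  · -- right inverse
    rintro ⟨a, b, c, d⟩ hq
    simp only [mem_filter, mem_Q] at hq
    obtain ⟨⟨ha, hb, hc, hd, he⟩, hac⟩ := hq
    by_cases h : c < a
    · simp only [pik, if_pos h]
      simp only [kap]
      rw [if_pos (show b < d + b by omega)]
      simp only [Prod.mk.injEq]
      exact ⟨by omega, trivial, trivial, by omega⟩
    · simp only [pik, if_neg h]
      simp only [kap]
      rw [if_neg (show ¬ (b + d < d) by omega)]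
      simp only [Prod.mk.injEq]
      exact ⟨trivial, by omega, by omega, trivial⟩
  · -- value equality
    rintro ⟨a, b, c, d⟩ hq
    simp only [mem_filter, mem_Q] at hq
    obtain ⟨⟨ha, hb, hc, hd, he⟩, hbd⟩ := hq
    by_cases h : b < d
    · simp only [E1, E2, kap, if_pos h]
      have : (3 ∣ a + c + c) ↔ (3 ∣ a + 2 * c) := by omega
      simp [this]
    · simp only [E1, E2, kap, if_neg h]
      have : (3 ∣ a + (c + a)) ↔ (3 ∣ a + 2 * c) := by omega
      simp [this]

lemma b_eq_one {p a b c : ℕ} (hp : p.Prime) (ha : 0 < a) (hc : 0 < c)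
    (hfac : (a + c) * b = p) : b = 1 := by
  rcases (hp.eq_one_or_self_of_dvd b ⟨a + c, by rw [← hfac]; ring⟩) with h | h
  · exact h
  · exfalso
    have hppos : 0 < p := hp.pos
    nlinarith [hfac, h]

lemma bd_sum {p : ℕ} (hp : p.Prime) :
    ∑ q ∈ (Q p).filter (fun q => q.2.1 = q.2.2.2), E1 q =
    (((Ioo 0 p).filter (fun a => 3 ∣ 2 * p - a)).card : ℤ) := by
  rw [← Finset.sum_boole]
  apply Finset.sum_nbij' (i := fun q => q.1) (j := fun a => (a, 1, p - a, 1))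
  · rintro ⟨a, b, c, d⟩ hq
    simp only [mem_filter, mem_Q] at hq
    obtain ⟨⟨ha, hb, hc, hd, he⟩, hbd⟩ := hq
    have h1 : a ≤ a * b := Nat.le_mul_of_pos_right _ hb
    have h2 : 0 < c * d := Nat.mul_pos hc hd
    simp only [mem_Ioo]
    omega
  · rintro a ha
    simp only [mem_Ioo] at ha
    simp only [mem_filter, mem_Q]
    refine ⟨⟨ha.1, one_pos, by omega, one_pos, ?_⟩, trivial⟩
    have : a * 1 + (p - a) * 1 = a + (p - a) := by ring
    omega
  · rintro ⟨a, b, c, d⟩ hq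
    simp only [mem_filter, mem_Q] at hq
    obtain ⟨⟨ha, hb, hc, hd, he⟩, hbd⟩ := hq
    subst hbd
    have hfac : (a + c) * b = p := by rw [← he]; ring
    have hb1 : b = 1 := b_eq_one hp ha hc hfac
    subst hb1
    simp only [Prod.mk.injEq]
    exact ⟨trivial, trivial, by omega, trivial⟩
  · rintro a ha
    rfl
  · rintro ⟨a, b, c, d⟩ hq
    simp only [mem_filter, mem_Q] at hq
    obtain ⟨⟨ha, hb, hc, hd, he⟩, hbd⟩ := hq
    subst hbd
    have hfac : (a + c) * b = p := by rw [← he]; ring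
    have hb1 : b = 1 := b_eq_one hp ha hc hfac
    subst hb1
    have hac : a + c = p := by omega
    simp only [E1]
    exact if_congr (by omega) rfl rfl

lemma ac_sum {p : ℕ} (hp : p.Prime) :
    ∑ q ∈ (Q p).filter (fun q => q.1 = q.2.2.1), E2 q = 0 := by
  apply Finset.sum_eq_zero
  rintro ⟨a, b, c, d⟩ hq
  simp only [mem_filter, mem_Q] at hq
  obtain ⟨⟨ha, hb, hc, hd, he⟩, hac⟩ := hq
  subst hac
  have hfac : (b + d) * a = p := by rw [← he]; ring
  have ha1 : a = 1 := b_eq_one hp hb hd hfac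
  subst ha1
  simp only [E2]
  rw [if_neg (by omega)]

lemma conv_eq_sumQ {p : ℕ} :
    ∑ u ∈ Ioo 0 p, G u * G (p - u) =
      ∑ q ∈ Q p, kroneckerNegThree q.1 * kroneckerNegThree q.2.2.1 := by
  have hmap : ∀ q ∈ Q p, q.1 * q.2.1 ∈ Ioo 0 p := by
    rintro ⟨a, b, c, d⟩ hq
    simp only [mem_Q] at hq
    obtain ⟨ha, hb, hc, hd, he⟩ := hq
    have h1 : 0 < a * b := Nat.mul_pos ha hb
    have h2 : 0 < c * d := Nat.mul_pos hc hd
    simp only [mem_Ioo]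
    omega
  rw [← Finset.sum_fiberwise_of_maps_to hmap
    (fun q => kroneckerNegThree q.1 * kroneckerNegThree q.2.2.1)]
  apply Finset.sum_congr rfl
  intro u hu
  simp only [mem_Ioo] at hu
  have hu0 : u ≠ 0 := by omega
  have hpu0 : p - u ≠ 0 := by omega
  have hG : G u * G (p - u) =
      ∑ x ∈ u.divisorsAntidiagonal ×ˢ (p - u).divisorsAntidiagonal,
        kroneckerNegThree x.1.1 * kroneckerNegThree x.2.1 := by
    rw [Finset.sum_product]
    unfold G
    rw [← Nat.sum_divisorsAntidiagonal (fun a _ => kroneckerNegThree a),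
      ← Nat.sum_divisorsAntidiagonal (fun a _ => kroneckerNegThree a),
      Finset.sum_mul]
    apply Finset.sum_congr rfl
    intro x _
    rw [Finset.mul_sum]
  rw [hG]
  apply Finset.sum_nbij' (i := fun x => (x.1.1, x.1.2, x.2.1, x.2.2))
    (j := fun q => ((q.1, q.2.1), (q.2.2.1, q.2.2.2)))
  · rintro ⟨⟨a, b⟩, ⟨c, d⟩⟩ hx
    simp only [mem_product, Nat.mem_divisorsAntidiagonal] at hx
    obtain ⟨⟨hab, -⟩, ⟨hcd, -⟩⟩ := hx
    simp only [mem_filter, mem_Q]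
    have ha : 0 < a := by
      rcases Nat.eq_zero_or_pos a with h | h
      · exfalso; rw [h] at hab; simp at hab; omega
      · exact h
    have hb : 0 < b := by
      rcases Nat.eq_zero_or_pos b with h | h
      · exfalso; rw [h] at hab; simp at hab; omega
      · exact h
    have hc : 0 < c := by
      rcases Nat.eq_zero_or_pos c with h | h
      · exfalso; rw [h] at hcd; simp at hcd; omega
      · exact h
    have hd : 0 < d := by
      rcases Nat.eq_zero_or_pos d with h | h
      · exfalso; rw [h] at hcd; simp at hcd; omega
      · exact h
    exact ⟨⟨ha, hb, hc, hd, by omega⟩, hab⟩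
  · rintro ⟨a, b, c, d⟩ hq
    simp only [mem_filter, mem_Q] at hq
    obtain ⟨⟨ha, hb, hc, hd, he⟩, hab⟩ := hq
    simp only [mem_product, Nat.mem_divisorsAntidiagonal]
    exact ⟨⟨hab, hu0⟩, by omega, hpu0⟩
  · rintro ⟨⟨a, b⟩, ⟨c, d⟩⟩ _; rfl
  · rintro ⟨a, b, c, d⟩ _; rfl
  · rintro ⟨⟨a, b⟩, ⟨c, d⟩⟩ _; rfl

lemma count_eval {p : ℕ} (hp : 1 < p) :
    (((Ioo 0 p).filter (fun a => 3 ∣ 2 * p - a)).card) = (2 * p - 1) / 3 - p / 3 := by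
  have hbij : ((Ioo 0 p).filter (fun a => 3 ∣ 2 * p - a)).card =
      ((Ioc p (2 * p - 1)).filter (fun m => 3 ∣ m)).card := by
    apply Finset.card_nbij' (i := fun a => 2 * p - a) (j := fun m => 2 * p - m)
    · intro a ha
      simp only [mem_coe, mem_filter, mem_Ioo] at ha
      simp only [mem_coe, mem_filter, mem_Ioc]
      omega
    · intro m hm
      simp only [mem_coe, mem_filter, mem_Ioc] at hm
      simp only [mem_coe, mem_filter, mem_Ioo]
      omega
    · intro a ha
      simp only [mem_coe, mem_filter, mem_Ioo] at ha ⊢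
      omega
    · intro m hm
      simp only [mem_coe, mem_filter, mem_Ioc] at hm ⊢
      omega
  have hdisj : Disjoint (Ioc 0 p) (Ioc p (2 * p - 1)) := by
    rw [Finset.disjoint_left]
    intro x hx hx'
    simp only [mem_Ioc] at hx hx'
    omega
  rw [hbij, ← Nat.Ioc_filter_dvd_card_eq_div (2 * p - 1) 3, ← Nat.Ioc_filter_dvd_card_eq_div p 3]
  have hsplit : Ioc 0 (2 * p - 1) = Ioc 0 p ∪ Ioc p (2 * p - 1) :=
    (Finset.Ioc_union_Ioc_eq_Ioc (by omega) (by omega)).symm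
  rw [hsplit, filter_union,
    Finset.card_union_of_disjoint (Finset.disjoint_filter_filter hdisj)]
  omega

lemma reindex {p : ℕ} (hodd : p % 2 = 1) :
    ∑ u ∈ Ioo 0 p, G (4 * (u * (p - u))) =
      2 * ∑ x ∈ (Ioo 0 p).filter (fun x => Odd x), G (p ^ 2 - x ^ 2) := by
  rw [← Finset.sum_filter_add_sum_filter_not (Ioo 0 p) (fun u => 2 * u < p)]
  have hswap : ∑ u ∈ (Ioo 0 p).filter (fun u => ¬ 2 * u < p), G (4 * (u * (p - u))) =
      ∑ u ∈ (Ioo 0 p).filter (fun u => 2 * u < p), G (4 * (u * (p - u))) := by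
    apply Finset.sum_nbij' (i := fun u => p - u) (j := fun u => p - u)
    · intro u hu
      simp only [mem_filter, mem_Ioo] at hu ⊢
      omega
    · intro u hu
      simp only [mem_filter, mem_Ioo] at hu ⊢
      omega
    · intro u hu
      simp only [mem_filter, mem_Ioo] at hu
      omega
    · intro u hu
      simp only [mem_filter, mem_Ioo] at hu
      omega
    · intro u hu
      simp only [mem_filter, mem_Ioo] at hu
      have h1 : p - (p - u) = u := by omega
      rw [h1]
      congr 1
      ring
  have hhalf : ∑ u ∈ (Ioo 0 p).filter (fun u => 2 * u < p), G (4 * (u * (p - u))) =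
      ∑ x ∈ (Ioo 0 p).filter (fun x => Odd x), G (p ^ 2 - x ^ 2) := by
    apply Finset.sum_nbij' (i := fun u => p - 2 * u) (j := fun x => (p - x) / 2)
    · intro u hu
      simp only [mem_filter, mem_Ioo] at hu
      simp only [mem_filter, mem_Ioo, Nat.odd_iff]
      omega
    · intro x hx
      simp only [mem_filter, mem_Ioo, Nat.odd_iff] at hx
      simp only [mem_filter, mem_Ioo]
      omega
    · intro u hu
      simp only [mem_filter, mem_Ioo] at hu
      omega
    · intro x hx
      simp only [mem_filter, mem_Ioo, Nat.odd_iff] at hx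
      omega
    · intro u hu
      simp only [mem_filter, mem_Ioo] at hu
      congr 1
      obtain ⟨hu1, hu2⟩ := hu
      obtain ⟨k, hk⟩ : ∃ k, p = 2 * u + k := ⟨p - 2 * u, by omega⟩
      have h1 : p - 2 * u = k := by omega
      have h2 : p - u = u + k := by omega
      rw [h1, h2, hk]
      have h3 : (2 * u + k) ^ 2 = k ^ 2 + 4 * (u * (u + k)) := by ring
      omega
  rw [hswap, hhalf]
  ring
end SK

/-- Let `p` be an odd prime not divisible by `3`.  Then
`2·∑_{0<x<p, x odd} ∑_{0<r ∣ p²−x²} χ(r)` equals `(p−1)/3` if `p ≡ 1 (mod 3)` and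
`(p+1)/3` if `p ≡ 2 (mod 3)`. -/
theorem sum_kronecker_odd (p : ℕ) (hp : p.Prime) (hodd : Odd p) (h3 : ¬ 3 ∣ p) :
    (p % 3 = 1 →
      2 * ∑ x ∈ (Finset.Ioo 0 p).filter (fun x => Odd x),
        ∑ r ∈ (p ^ 2 - x ^ 2).divisors, kroneckerNegThree r = ((p : ℤ) - 1) / 3) ∧
    (p % 3 = 2 →
      2 * ∑ x ∈ (Finset.Ioo 0 p).filter (fun x => Odd x),
        ∑ r ∈ (p ^ 2 - x ^ 2).divisors, kroneckerNegThree r = ((p : ℤ) + 1) / 3) := by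
  classical
  have hp1 : 1 < p := hp.one_lt
  have hop : p % 2 = 1 := Nat.odd_iff.mp hodd
  have key : 2 * ∑ x ∈ (Finset.Ioo 0 p).filter (fun x => Odd x),
      ∑ r ∈ (p ^ 2 - x ^ 2).divisors, kroneckerNegThree r
      = (((Finset.Ioo 0 p).filter (fun a => 3 ∣ 2 * p - a)).card : ℤ) := by
    have h1 := SK.reindex hop
    have h0 : (2 : ℤ) * ∑ x ∈ (Finset.Ioo 0 p).filter (fun x => Odd x),
        ∑ r ∈ (p ^ 2 - x ^ 2).divisors, kroneckerNegThree r
        = ∑ u ∈ Finset.Ioo 0 p, SK.G (4 * (u * (p - u))) := h1.symm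
    rw [h0]
    have h2 : ∑ u ∈ Finset.Ioo 0 p, SK.G (4 * (u * (p - u)))
        = ∑ u ∈ Finset.Ioo 0 p, SK.G u * SK.G (p - u) := by
      apply Finset.sum_congr rfl
      intro u hu
      simp only [Finset.mem_Ioo] at hu
      have hne : u * (p - u) ≠ 0 := by
        have := Nat.mul_pos hu.1 (show 0 < p - u by omega)
        omega
      have hcop : Nat.Coprime u (p - u) := by
        have hdvd : Nat.gcd u (p - u) ∣ p := by
          have h := Nat.dvd_add (Nat.gcd_dvd_left u (p - u)) (Nat.gcd_dvd_right u (p - u))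
          have hup : u + (p - u) = p := by omega
          rwa [hup] at h
        rcases hp.eq_one_or_self_of_dvd _ hdvd with h | h
        · exact h
        · exfalso
          have h2 : Nat.gcd u (p - u) ∣ u := Nat.gcd_dvd_left _ _
          rw [h] at h2
          have := Nat.le_of_dvd hu.1 h2
          omega
      rw [SK.G_four_mul hne, SK.G_mul_coprime hcop]
    rw [h2, SK.conv_eq_sumQ]
    have h3 : ∑ q ∈ SK.Q p, kroneckerNegThree q.1 * kroneckerNegThree q.2.2.1
        = ∑ q ∈ SK.Q p, (SK.E1 q - SK.E2 q) := by
      apply Finset.sum_congr rfl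
      intro q _
      rw [SK.chi_pair]
      rfl
    rw [h3, Finset.sum_sub_distrib]
    rw [← Finset.sum_filter_add_sum_filter_not (SK.Q p) (fun q => q.2.1 = q.2.2.2) SK.E1,
      ← Finset.sum_filter_add_sum_filter_not (SK.Q p) (fun q => q.1 = q.2.2.1) SK.E2]
    rw [SK.bd_sum hp, SK.ac_sum hp, SK.kappa_sum p]
    ring
  have hC := SK.count_eval hp1
  constructor
  · intro h1
    rw [key]
    omega
  · intro h1
    rw [key]
    omega
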